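/- arXiv:1303.5464 — 4 statements merged into one kernel-verified Lean document; each statement's English description precedes it below -/
import Mathlib

section
/- The double series defining the regularized confluent hypergeometric function of two variables, Φ̃₃(b,c;w,z) = Σ_{k≥0} Σ_{m≥0} (b)_k / Γ(c+k+m) · w^k z^m / (k! m!), converges absolutely for all real b, c, w, z (where (b)_k = Γ(b+k)/Γ(b) is the Pochhammer symbol and terms with Γ evaluated at non-positive integers are interpreted as zero via 1/Γ). -/
open scoped BigOperators
open MeasureTheory

/-- Term of the double series defining the regularized Φ̃₃ function. -/
noncomputable def phi3Term (b c w z : ℝ) (k m : ℕ) : ℝ :=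
  Polynomial.eval b (ascPochhammer ℝ k) * (Real.Gamma (c + k + m))⁻¹ *
    w ^ k * z ^ m / (Nat.factorial k * Nat.factorial m)

/-- The regularized confluent hypergeometric function of two variables Φ̃₃. -/
noncomputable def Phi3 (b c w z : ℝ) : ℝ :=
  ∑' k : ℕ, ∑' m : ℕ, phi3Term b c w z k m

/-- Modified Bessel function of the first kind of integer order (I₋ₙ = Iₙ). -/
noncomputable def besselI (n : ℤ) (x : ℝ) : ℝ :=
  ∑' m : ℕ, (x / 2) ^ (2 * m + n.natAbs) /
    (Nat.factorial m * Nat.factorial (m + n.natAbs))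

/-- Modified Bessel function of the first kind of real order. -/
noncomputable def besselIR (ν x : ℝ) : ℝ :=
  ∑' m : ℕ, (x / 2) ^ ((2 * m : ℝ) + ν) * (Real.Gamma ((m : ℝ) + ν + 1))⁻¹ /
    Nat.factorial m

/-- Generalized Marcum-Q function of integer order. -/
noncomputable def marcumQ (m : ℤ) (a b : ℝ) : ℝ :=
  ∫ x in Set.Ioi b,
    x ^ m / a ^ (m - 1) * Real.exp (-(a ^ 2 + x ^ 2) / 2) * besselI (m - 1) (a * x)

/-- Generalized Marcum-Q function of real order. -/
noncomputable def marcumQR (m a b : ℝ) : ℝ :=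
  ∫ x in Set.Ioi b,
    x ^ m / a ^ (m - 1) * Real.exp (-(a ^ 2 + x ^ 2) / 2) * besselIR (m - 1) (a * x)

/-- The polynomials A_i(b,c;z) in the Φ̃₃ reduction formula. -/
noncomputable def Acoef (b : ℕ) (c z : ℝ) (i : ℕ) : ℝ :=
  ((-1 : ℝ) ^ (b - 1) / Nat.factorial (b - 1)) *
    ∑ k ∈ Finset.range (i / 2 + 1),
      (-1 : ℝ) ^ k * Polynomial.eval ((b : ℝ) - i + k) (ascPochhammer ℝ (i - k)) *
        Polynomial.eval (c - i - 1 + k) (ascPochhammer ℝ (i - 2 * k)) * z ^ k /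
        (Nat.factorial (i - 2 * k) * Nat.factorial k)


lemma phi3Term_succ_m (b c w z : ℝ) (k m : ℕ) (hx : c + k + m ≠ 0) :
    phi3Term b c w z k (m + 1)
      = phi3Term b c w z k m * (z / ((c + k + m) * (m + 1))) := by
  simp only [phi3Term]
  have h1 : (c + (k : ℝ) + ((m : ℕ) + 1 : ℕ)) = (c + k + m) + 1 := by push_cast; ring
  rw [h1, Real.Gamma_add_one hx, Nat.factorial_succ]
  push_cast
  rw [pow_succ]
  field_simp

lemma phi3Term_succ_k (b c w z : ℝ) (k m : ℕ) (hx : c + k + m ≠ 0) :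
    phi3Term b c w z (k + 1) m
      = phi3Term b c w z k m * ((b + k) * w / ((c + k + m) * (k + 1))) := by
  simp only [phi3Term]
  have h1 : (c + ((k : ℕ) + 1 : ℕ) + (m : ℝ)) = (c + k + m) + 1 := by push_cast; ring
  rw [h1, Real.Gamma_add_one hx, Nat.factorial_succ, ascPochhammer_succ_right,
    Polynomial.eval_mul, Polynomial.eval_add, Polynomial.eval_X, Polynomial.eval_natCast]
  push_cast
  rw [pow_succ]
  field_simp

lemma phi3_inner_summable (b c w z : ℝ) (k : ℕ) :
    Summable fun m : ℕ => |phi3Term b c w z k m| := by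
  apply summable_of_ratio_norm_eventually_le (r := 1/2) (by norm_num)
  filter_upwards [Filter.eventually_ge_atTop ⌈|c| + 2 * |z| + 1⌉₊] with m hm
  have hm' : |c| + 2 * |z| + 1 ≤ (m : ℝ) :=
    le_trans (Nat.le_ceil _) (Nat.cast_le.mpr hm)
  have hc : -|c| ≤ c := neg_abs_le c
  have hk : (0:ℝ) ≤ k := Nat.cast_nonneg k
  have hz : (0:ℝ) ≤ |z| := abs_nonneg z
  have hx : (0:ℝ) < c + k + m := by linarith
  rw [Real.norm_eq_abs, Real.norm_eq_abs, abs_abs, abs_abs,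
    phi3Term_succ_m b c w z k m hx.ne', abs_mul]
  have hq : |z / ((c + k + m) * (m + 1))| ≤ 1/2 := by
    rw [abs_div, abs_of_pos (by positivity : (0:ℝ) < (c + k + m) * (m + 1))]
    rw [div_le_iff₀ (by positivity)]
    have hm1 : (1:ℝ) ≤ (m:ℝ) + 1 := by linarith
    nlinarith
  calc |phi3Term b c w z k m| * |z / ((c + k + m) * (m + 1))|
      ≤ |phi3Term b c w z k m| * (1/2) := by
        exact mul_le_mul_of_nonneg_left hq (abs_nonneg _)
    _ = 1/2 * |phi3Term b c w z k m| := by ring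

noncomputable def phi3Aux (b c w : ℝ) (n : ℕ) : ℝ :=
  |Polynomial.eval b (ascPochhammer ℝ n)| * (Real.Gamma (c + n))⁻¹ * |w| ^ n /
    Nat.factorial n

lemma phi3Aux_summable (b c w : ℝ) : Summable (phi3Aux b c w) := by
  apply summable_of_ratio_norm_eventually_le (r := 1/2) (by norm_num)
  filter_upwards [Filter.eventually_ge_atTop ⌈|b| + 2 * |c| + 8 * |w| + 4⌉₊] with n hn
  have hn' : |b| + 2 * |c| + 8 * |w| + 4 ≤ (n : ℝ) :=
    le_trans (Nat.le_ceil _) (Nat.cast_le.mpr hn)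
  have hb : -|b| ≤ b := neg_abs_le b
  have hb' : b ≤ |b| := le_abs_self b
  have hc : -|c| ≤ c := neg_abs_le c
  have hw : (0:ℝ) ≤ |w| := abs_nonneg w
  have hb0 : (0:ℝ) ≤ |b| := abs_nonneg b
  have hc0 : (0:ℝ) ≤ |c| := abs_nonneg c
  have hx : (0:ℝ) < c + n := by linarith
  have hG : 0 < Real.Gamma (c + n) := Real.Gamma_pos_of_pos hx
  have hrec : phi3Aux b c w (n + 1)
      = phi3Aux b c w n * (|b + n| * |w| / ((c + n) * (n + 1))) := by
    simp only [phi3Aux]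
    have h1 : (c + ((n : ℕ) + 1 : ℕ) : ℝ) = (c + n) + 1 := by push_cast; ring
    rw [h1, Real.Gamma_add_one hx.ne', Nat.factorial_succ, ascPochhammer_succ_right,
      Polynomial.eval_mul, Polynomial.eval_add, Polynomial.eval_X, Polynomial.eval_natCast,
      abs_mul]
    push_cast
    rw [pow_succ]
    rw [mul_inv]
    field_simp
  have hq : |b + n| * |w| / ((c + n) * (n + 1)) ≤ 1/2 := by
    rw [div_le_iff₀ (by positivity)]
    have habs : |b + n| ≤ |b| + n := by
      calc |b + n| ≤ |b| + |(n:ℝ)| := abs_add_le _ _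
        _ = |b| + n := by rw [abs_of_nonneg (Nat.cast_nonneg (α := ℝ) n)]
    nlinarith [abs_nonneg (b + (n:ℝ))]
  have hqnn : 0 ≤ |b + n| * |w| / ((c + n) * (n + 1)) := by positivity
  rw [Real.norm_eq_abs, Real.norm_eq_abs, hrec, abs_mul, abs_of_nonneg hqnn]
  calc |phi3Aux b c w n| * (|b + n| * |w| / ((c + n) * (n + 1)))
      ≤ |phi3Aux b c w n| * (1/2) := mul_le_mul_of_nonneg_left hq (abs_nonneg _)
    _ = 1/2 * |phi3Aux b c w n| := by ring

lemma phi3Term_le (b c w z : ℝ) (k m : ℕ) (h2 : (2:ℝ) ≤ c + k) :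
    |phi3Term b c w z k m| ≤ phi3Aux b c w k * (|z| ^ m / Nat.factorial m) := by
  have hm0 : (0:ℝ) ≤ m := Nat.cast_nonneg m
  have h2m : (2:ℝ) ≤ c + k + m := by linarith
  have hGk : 0 < Real.Gamma (c + k) := Real.Gamma_pos_of_pos (by linarith)
  have hGkm : 0 < Real.Gamma (c + k + m) := Real.Gamma_pos_of_pos (by linarith)
  have hmono : Real.Gamma (c + k) ≤ Real.Gamma (c + k + m) :=
    Real.Gamma_strictMonoOn_Ici.monotoneOn h2 h2m (by linarith)
  have hinv : (Real.Gamma (c + k + m))⁻¹ ≤ (Real.Gamma (c + k))⁻¹ :=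
    inv_anti₀ hGk hmono
  have hfac : (0:ℝ) < (Nat.factorial k : ℝ) * (Nat.factorial m : ℝ) := by positivity
  have heq : |phi3Term b c w z k m|
      = |Polynomial.eval b (ascPochhammer ℝ k)| * (Real.Gamma (c + k + m))⁻¹ *
        |w| ^ k * |z| ^ m / ((Nat.factorial k : ℝ) * (Nat.factorial m : ℝ)) := by
    simp only [phi3Term]
    rw [abs_div, abs_mul, abs_mul, abs_mul, abs_pow, abs_pow,
      abs_of_pos hfac, abs_of_pos (inv_pos.mpr hGkm)]
  rw [heq]
  calc |Polynomial.eval b (ascPochhammer ℝ k)| * (Real.Gamma (c + k + m))⁻¹ *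
        |w| ^ k * |z| ^ m / ((Nat.factorial k : ℝ) * (Nat.factorial m : ℝ))
      ≤ |Polynomial.eval b (ascPochhammer ℝ k)| * (Real.Gamma (c + k))⁻¹ *
        |w| ^ k * |z| ^ m / ((Nat.factorial k : ℝ) * (Nat.factorial m : ℝ)) := by
        gcongr <;> tauto
    _ = phi3Aux b c w k * (|z| ^ m / Nat.factorial m) := by
        simp only [phi3Aux, div_mul_div_comm]

/-- absolute convergence of the Φ̃₃ double series for all real parameters. -/
theorem phi3_summable_abs (b c w z : ℝ) :
    Summable (fun p : ℕ × ℕ => |phi3Term b c w z p.1 p.2|) := by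
  rw [summable_prod_of_nonneg (fun p => abs_nonneg _)]
  refine ⟨fun k => phi3_inner_summable b c w z k, ?_⟩
  set K : ℕ := ⌈|c|⌉₊ + 2 with hK
  have hKc : ∀ n : ℕ, (2:ℝ) ≤ c + (n + K : ℕ) := by
    intro n
    have h1 : |c| ≤ (⌈|c|⌉₊ : ℝ) := Nat.le_ceil _
    have hc : -|c| ≤ c := neg_abs_le c
    have h2 : ((⌈|c|⌉₊ + 2 : ℕ) : ℝ) ≤ ((n + K : ℕ) : ℝ) := by
      rw [hK]; push_cast; linarith [Nat.cast_nonneg (α := ℝ) n]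
    push_cast at h2 ⊢
    linarith
  rw [← summable_nat_add_iff K]
  have hz : Summable fun m : ℕ => |z| ^ m / (Nat.factorial m : ℝ) :=
    Real.summable_pow_div_factorial |z|
  refine Summable.of_nonneg_of_le (fun n => tsum_nonneg fun m => abs_nonneg _)
    (f := fun n => phi3Aux b c w (n + K) * ∑' m : ℕ, |z| ^ m / (Nat.factorial m : ℝ))
    (fun n => ?_) ?_
  · calc ∑' m : ℕ, |phi3Term b c w z (n + K) m|
        ≤ ∑' m : ℕ, phi3Aux b c w (n + K) * (|z| ^ m / (Nat.factorial m : ℝ)) :=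
          Summable.tsum_le_tsum (fun m => phi3Term_le b c w z (n + K) m (hKc n))
            (phi3_inner_summable b c w z (n + K)) (hz.mul_left _)
      _ = phi3Aux b c w (n + K) * ∑' m : ℕ, |z| ^ m / (Nat.factorial m : ℝ) :=
          tsum_mul_left
  · exact ((summable_nat_add_iff K).mpr (phi3Aux_summable b c w)).mul_right _
end

section
/- For c ∈ ℝ, b > 1, and x ≠ 0, the regularized Φ̃₃ function satisfies the three-term recursion Φ̃₃(b,c;w,z) = (1/((b-1)w)) · [Φ̃₃(b-1,c-2;w,z) − (c−2)·Φ̃₃(b−1,c−1;w,z) − z·Φ̃₃(b−1,c;w,z)]. -/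
open scoped BigOperators
open MeasureTheory

lemma invGamma_rec (s : ℝ) : (Real.Gamma s)⁻¹ = s * (Real.Gamma (s+1))⁻¹ := by
  by_cases h : ∃ m : ℕ, s = -m
  · obtain ⟨m, rfl⟩ := h
    rw [(Real.Gamma_eq_zero_iff _).2 ⟨m, rfl⟩, inv_zero]
    cases m with
    | zero => simp
    | succ n =>
      have h1 : (-(n+1:ℕ) : ℝ) + 1 = -n := by push_cast; ring
      rw [h1, (Real.Gamma_eq_zero_iff _).2 ⟨n, rfl⟩, inv_zero, mul_zero]
  · push_neg at h
    have hs0 : s ≠ 0 := by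
      intro h0; exact h 0 (by simp [h0])
    rw [Real.Gamma_add_one hs0, mul_inv, ← mul_assoc, mul_inv_cancel₀ hs0, one_mul]
lemma asc_eval_prod (b : ℝ) (k : ℕ) : Polynomial.eval b (ascPochhammer ℝ k) = ∏ j ∈ Finset.range k, (b + j) := by
  induction k with
  | zero => simp
  | succ n ih => rw [ascPochhammer_succ_eval, ih, Finset.prod_range_succ]
lemma gamma_lb (x : ℝ) (hx : 2 ≤ x) (j : ℕ) : (j.factorial : ℝ) ≤ Real.Gamma (x + j) := by
  induction j with
  | zero =>
    simpa using le_trans (le_of_eq Real.Gamma_two.symm)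
      (Real.Gamma_strictMonoOn_Ici.monotoneOn (by norm_num) hx hx)
  | succ n ih =>
    have h2 : Real.Gamma (x + (n+1:ℕ)) = (x + n) * Real.Gamma (x + n) := by
      have h3 := Real.Gamma_add_one (s := x + n) (by positivity)
      rw [← h3]; push_cast; ring_nf
    rw [h2]
    push_cast [Nat.factorial_succ]
    have h1 : (n+1 : ℝ) ≤ x + n := by linarith
    have h4 := mul_le_mul h1 ih (by positivity) (by linarith)
    linarith [h4]
lemma fact_le_aux (m N : ℕ) : (m+N).factorial ≤ m.factorial * (m+N)^N := by
  induction N with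
  | zero => simp
  | succ n ih =>
    have h1 : (m + (n+1)).factorial = (m+n+1) * (m+n).factorial := by
      rw [← Nat.add_assoc, Nat.factorial_succ]
    rw [h1]
    calc (m+n+1) * (m+n).factorial ≤ (m+n+1) * (m.factorial * (m+n)^n) :=
          Nat.mul_le_mul_left _ ih
      _ ≤ (m+n+1) * (m.factorial * (m+n+1)^n) := by
          have := Nat.pow_le_pow_left (Nat.le_succ (m+n)) n
          exact Nat.mul_le_mul_left _ (Nat.mul_le_mul_left _ this)
      _ = m.factorial * (m+(n+1))^(n+1) := by ring_nf
lemma invGamma_bound (c : ℝ) : ∃ C B : ℝ, 0 ≤ C ∧ 1 ≤ B ∧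
    ∀ n : ℕ, |(Real.Gamma (c+n))⁻¹| ≤ C * B^n / n.factorial := by
  set N : ℕ := ⌈2 - c⌉₊ with hN
  set C : ℝ := max ((∑ i ∈ Finset.range N, |(Real.Gamma (c+i))⁻¹|) * N.factorial) 1 with hC
  have hC1 : (1:ℝ) ≤ C := le_max_right _ _
  have hC0 : (0:ℝ) ≤ C := zero_le_one.trans hC1
  have hB1 : (1:ℝ) ≤ 2^N := one_le_pow₀ one_le_two
  refine ⟨C, 2^N, hC0, hB1, fun n => ?_⟩
  have hBn : (1:ℝ) ≤ (2^N:ℝ)^n := one_le_pow₀ hB1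
  have hfpos : (0:ℝ) < n.factorial := by exact_mod_cast Nat.factorial_pos n
  rcases lt_or_ge n N with hn | hn
  · have h1 : |(Real.Gamma (c+n))⁻¹| ≤ ∑ i ∈ Finset.range N, |(Real.Gamma (c+i))⁻¹| := by
      apply Finset.single_le_sum (f := fun i : ℕ => |(Real.Gamma (c+i))⁻¹|)
        (fun i _ => abs_nonneg _) (Finset.mem_range.2 hn)
    have hfle : (n.factorial : ℝ) ≤ N.factorial := by
      exact_mod_cast Nat.factorial_le hn.le
    rw [le_div_iff₀ hfpos]
    calc |(Real.Gamma (c+n))⁻¹| * n.factorial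
        ≤ (∑ i ∈ Finset.range N, |(Real.Gamma (c+i))⁻¹|) * N.factorial := by
          apply mul_le_mul h1 hfle (by positivity)
          exact Finset.sum_nonneg fun i _ => abs_nonneg _
      _ ≤ C := le_max_left _ _
      _ = C * 1 := (mul_one C).symm
      _ ≤ C * (2^N:ℝ)^n := by apply mul_le_mul_of_nonneg_left hBn hC0
  · set m : ℕ := n - N with hm
    have hmn : m + N = n := Nat.sub_add_cancel hn
    have hcN : (2:ℝ) ≤ c + N := by
      have := Nat.le_ceil (2 - c); rw [← hN] at this; linarith
    have hg : (m.factorial : ℝ) ≤ Real.Gamma (c + n) := by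
      have h := gamma_lb (c + N) hcN m
      have hcast : c + (N:ℝ) + m = c + n := by rw [← hmn]; push_cast; ring
      rwa [hcast] at h
    have hmpos : (0:ℝ) < m.factorial := by exact_mod_cast Nat.factorial_pos m
    have hgpos : (0:ℝ) < Real.Gamma (c + n) := hmpos.trans_le hg
    rw [abs_of_pos (inv_pos.2 hgpos)]
    have h2 : (Real.Gamma (c+n))⁻¹ ≤ (m.factorial : ℝ)⁻¹ := inv_anti₀ hmpos hg
    refine h2.trans ?_
    have key : (n.factorial : ℝ) ≤ (m.factorial : ℝ) * (2^N:ℝ)^n := by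
      have h3 : (m+N).factorial ≤ m.factorial * (m+N)^N := fact_le_aux m N
      rw [hmn] at h3
      have h4 : n^N ≤ (2^n)^N := Nat.pow_le_pow_left (Nat.lt_two_pow_self (n := n)).le N
      have h5 : (2^n)^N = (2^N)^n := by rw [← pow_mul, ← pow_mul, Nat.mul_comm]
      have h6 : n.factorial ≤ m.factorial * (2^N)^n :=
        h3.trans (Nat.mul_le_mul_left _ (h4.trans_eq h5))
      exact_mod_cast h6
    rw [le_div_iff₀ hfpos]
    calc (m.factorial:ℝ)⁻¹ * n.factorial
        ≤ (m.factorial:ℝ)⁻¹ * ((m.factorial : ℝ) * (2^N:ℝ)^n) := by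
          apply mul_le_mul_of_nonneg_left key (by positivity)
      _ = (2^N:ℝ)^n := by field_simp
      _ ≤ C * (2^N:ℝ)^n := le_mul_of_one_le_left (by positivity) hC1
lemma prod_one_add_eq_factorial (k : ℕ) :
    ∏ j ∈ Finset.range k, ((1:ℝ) + j) = k.factorial := by
  induction k with
  | zero => simp
  | succ n ih => rw [Finset.prod_range_succ, ih, Nat.factorial_succ]; push_cast; ring
lemma poch_bound (b : ℝ) (hb : 0 < b) (k : ℕ) :
    |Polynomial.eval b (ascPochhammer ℝ k)| ≤ (max 1 b)^k * k.factorial := by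
  set A := max 1 b with hA
  have hA1 : (1:ℝ) ≤ A := le_max_left _ _
  rw [asc_eval_prod]
  rw [abs_of_nonneg (Finset.prod_nonneg fun j _ => by positivity)]
  have h1 : ∀ j ∈ Finset.range k, b + (j:ℝ) ≤ A * (1 + j) := by
    intro j _
    have hbA : b ≤ A := le_max_right _ _
    have : (j:ℝ) ≤ A * j := le_mul_of_one_le_left (by positivity) hA1
    nlinarith
  calc (∏ j ∈ Finset.range k, (b + (j:ℝ)))
      ≤ ∏ j ∈ Finset.range k, (A * (1 + j)) := by
        apply Finset.prod_le_prod (fun j _ => by positivity) h1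
    _ = A^k * ∏ j ∈ Finset.range k, ((1:ℝ) + j) := by
        rw [Finset.prod_mul_distrib, Finset.prod_const, Finset.card_range]
    _ = A^k * k.factorial := by rw [prod_one_add_eq_factorial]
lemma phi3_summable (b c w z : ℝ) (hb : 0 < b) :
    Summable (fun p : ℕ × ℕ => phi3Term b c w z p.1 p.2) := by
  obtain ⟨C, B, hC0, hB1, hG⟩ := invGamma_bound c
  set A := max 1 b with hA
  have hA1 : (1:ℝ) ≤ A := le_max_left _ _
  have hB0 : (0:ℝ) ≤ B := zero_le_one.trans hB1
  set f : ℕ → ℝ := fun k => C * ((A*B*|w|)^k / k.factorial) with hf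
  set g : ℕ → ℝ := fun m => (B*|z|)^m / m.factorial with hg
  have hfs : Summable f := (Real.summable_pow_div_factorial (A*B*|w|)).mul_left C
  have hgs : Summable g := Real.summable_pow_div_factorial (B*|z|)
  apply Summable.of_norm_bounded (g := fun p : ℕ × ℕ => f p.1 * g p.2)
    (hfs.mul_of_nonneg hgs (fun k => by positivity) (fun m => by positivity))
  rintro ⟨k, m⟩
  simp only [Real.norm_eq_abs]
  have hkf : (0:ℝ) < k.factorial := by exact_mod_cast Nat.factorial_pos k
  have hmf : (0:ℝ) < m.factorial := by exact_mod_cast Nat.factorial_pos m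
  have habs : |phi3Term b c w z k m| =
      |Polynomial.eval b (ascPochhammer ℝ k)| * |(Real.Gamma (c + k + m))⁻¹| *
        |w|^k * |z|^m / ((k.factorial : ℝ) * m.factorial) := by
    rw [phi3Term, abs_div, abs_mul, abs_mul, abs_mul, abs_pow, abs_pow,
      abs_of_pos (by positivity : (0:ℝ) < (k.factorial : ℝ) * m.factorial)]
  rw [habs]
  have hGkm : |(Real.Gamma (c + k + m))⁻¹| ≤ C * B^(k+m) / ((k.factorial:ℝ) * m.factorial) := by
    have h1 := hG (k+m)
    have hcast : c + ((k+m : ℕ):ℝ) = c + k + m := by push_cast; ring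
    rw [hcast] at h1
    refine h1.trans ?_
    have h2 : ((k.factorial:ℝ) * m.factorial) ≤ ((k+m).factorial : ℝ) := by
      exact_mod_cast Nat.le_of_dvd (Nat.factorial_pos _)
        (Nat.factorial_mul_factorial_dvd_factorial_add k m)
    exact div_le_div_of_nonneg_left (by positivity) (by positivity) h2
  calc |Polynomial.eval b (ascPochhammer ℝ k)| * |(Real.Gamma (c + k + m))⁻¹| *
        |w|^k * |z|^m / ((k.factorial : ℝ) * m.factorial)
      ≤ (A^k * k.factorial) * (C * B^(k+m) / ((k.factorial:ℝ) * m.factorial)) *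
        |w|^k * |z|^m / ((k.factorial : ℝ) * m.factorial) := by
        gcongr
        exact poch_bound b hb k
    _ = (f k * g m) * ((m.factorial:ℝ))⁻¹ := by
        rw [hf, hg]
        simp only []
        rw [pow_add]
        field_simp
        ring
    _ ≤ f k * g m := by
        apply mul_le_of_le_one_right (by positivity)
        exact inv_le_one_of_one_le₀ (by exact_mod_cast Nat.one_le_iff_ne_zero.2 (Nat.factorial_pos m).ne')

/-- three-term recursion for Φ̃₃ in its first parameter. -/
theorem phi3_recursion (b c w z : ℝ) (hb : 1 < b) (hw : w ≠ 0) :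
    Phi3 b c w z =
      (1 / ((b - 1) * w)) *
        (Phi3 (b - 1) (c - 2) w z - (c - 2) * Phi3 (b - 1) (c - 1) w z -
          z * Phi3 (b - 1) c w z) := by
  have hb0 : (0:ℝ) < b := by linarith
  have hb1 : (0:ℝ) < b - 1 := by linarith
  have S1 := phi3_summable (b-1) (c-2) w z hb1
  have S2 := phi3_summable (b-1) (c-1) w z hb1
  have S3 := phi3_summable (b-1) c w z hb1
  have S4 := phi3_summable b c w z hb0
  have hPhi : ∀ b' c', Summable (fun p : ℕ × ℕ => phi3Term b' c' w z p.1 p.2) →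
      Phi3 b' c' w z = ∑' p : ℕ × ℕ, phi3Term b' c' w z p.1 p.2 := by
    intro b' c' S
    rw [Phi3]
    exact (Summable.tsum_prod' S (fun k => S.prod_factor k)).symm
  set K : ℕ × ℕ → ℝ := fun p => p.1 * (Polynomial.eval (b-1) (ascPochhammer ℝ p.1) *
      (Real.Gamma (c - 1 + p.1 + p.2))⁻¹ * w ^ p.1 * z ^ p.2 /
      (Nat.factorial p.1 * Nat.factorial p.2)) with hK
  set M : ℕ × ℕ → ℝ := fun p => p.2 * (Polynomial.eval (b-1) (ascPochhammer ℝ p.1) *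
      (Real.Gamma (c - 1 + p.1 + p.2))⁻¹ * w ^ p.1 * z ^ p.2 /
      (Nat.factorial p.1 * Nat.factorial p.2)) with hM
  -- pointwise identity
  have hpt : ∀ p : ℕ × ℕ, phi3Term (b-1) (c-2) w z p.1 p.2 =
      (c-2) * phi3Term (b-1) (c-1) w z p.1 p.2 + (K p + M p) := by
    rintro ⟨k, m⟩
    have h := invGamma_rec (c - 2 + k + m)
    rw [show c - 2 + (k:ℝ) + m + 1 = c - 1 + k + m by ring] at h
    simp only [phi3Term, hK, hM, h]
    ring
  -- shift identities
  have hKs : ∀ p : ℕ × ℕ, K (p.1+1, p.2) = ((b-1)*w) * phi3Term b c w z p.1 p.2 := by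
    rintro ⟨k, m⟩
    simp only [hK, phi3Term, ascPochhammer_succ_left, Polynomial.eval_mul,
      Polynomial.eval_comp, Polynomial.eval_add, Polynomial.eval_X, Polynomial.eval_one]
    rw [show b - 1 + 1 = b by ring]
    rw [show c - 1 + ((k+1:ℕ):ℝ) + m = c + k + m by push_cast; ring]
    rw [Nat.factorial_succ]
    have hk : ((k:ℝ)+1) ≠ 0 := by positivity
    have hkf : ((k.factorial:ℝ)) ≠ 0 := by exact_mod_cast (Nat.factorial_pos k).ne'
    have hmf : ((m.factorial:ℝ)) ≠ 0 := by exact_mod_cast (Nat.factorial_pos m).ne'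
    push_cast
    generalize (Real.Gamma (c + (k:ℝ) + m))⁻¹ = G
    field_simp
    ring
  have hMs : ∀ p : ℕ × ℕ, M (p.1, p.2+1) = z * phi3Term (b-1) c w z p.1 p.2 := by
    rintro ⟨k, m⟩
    simp only [hM, phi3Term]
    rw [show c - 1 + (k:ℝ) + ((m+1:ℕ):ℝ) = c + k + m by push_cast; ring]
    rw [Nat.factorial_succ]
    have hm : ((m:ℝ)+1) ≠ 0 := by positivity
    have hkf : ((k.factorial:ℝ)) ≠ 0 := by exact_mod_cast (Nat.factorial_pos k).ne'
    have hmf : ((m.factorial:ℝ)) ≠ 0 := by exact_mod_cast (Nat.factorial_pos m).ne'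
    push_cast
    generalize (Real.Gamma (c + (k:ℝ) + m))⁻¹ = G
    field_simp
    ring
  -- injections
  have hKinj : Function.Injective (fun q : ℕ × ℕ => (q.1+1, q.2)) := by
    rintro ⟨a1, a2⟩ ⟨b1, b2⟩ h
    simpa [Prod.ext_iff] using h
  have hMinj : Function.Injective (fun q : ℕ × ℕ => (q.1, q.2+1)) := by
    rintro ⟨a1, a2⟩ ⟨b1, b2⟩ h
    simpa [Prod.ext_iff] using h
  have hKzero : ∀ p : ℕ × ℕ, p ∉ Set.range (fun q : ℕ × ℕ => (q.1+1, q.2)) → K p = 0 := by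
    rintro ⟨k, m⟩ hp
    cases k with
    | zero => simp [hK]
    | succ n => exact absurd ⟨(n, m), rfl⟩ hp
  have hMzero : ∀ p : ℕ × ℕ, p ∉ Set.range (fun q : ℕ × ℕ => (q.1, q.2+1)) → M p = 0 := by
    rintro ⟨k, m⟩ hp
    cases m with
    | zero => simp [hM]
    | succ n => exact absurd ⟨(k, n), rfl⟩ hp
  have hKsupp : Function.support K ⊆ Set.range (fun q : ℕ × ℕ => (q.1+1, q.2)) := by
    intro p hp
    by_contra hr
    exact hp (hKzero p hr)
  have hMsupp : Function.support M ⊆ Set.range (fun q : ℕ × ℕ => (q.1, q.2+1)) := by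
    intro p hp
    by_contra hr
    exact hp (hMzero p hr)
  have hKcomp : (K ∘ fun q : ℕ × ℕ => (q.1+1, q.2)) =
      fun q : ℕ × ℕ => ((b-1)*w) * phi3Term b c w z q.1 q.2 := funext fun q => hKs q
  have hMcomp : (M ∘ fun q : ℕ × ℕ => (q.1, q.2+1)) =
      fun q : ℕ × ℕ => z * phi3Term (b-1) c w z q.1 q.2 := funext fun q => hMs q
  have hKsummable : Summable K := by
    rw [← Function.Injective.summable_iff hKinj hKzero, hKcomp]
    exact S4.mul_left _
  have hMsummable : Summable M := by
    rw [← Function.Injective.summable_iff hMinj hMzero, hMcomp]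
    exact S3.mul_left _
  have hKsum : ∑' p, K p = ((b-1)*w) * ∑' p : ℕ × ℕ, phi3Term b c w z p.1 p.2 := by
    rw [← Function.Injective.tsum_eq hKinj hKsupp]
    rw [show (fun q : ℕ × ℕ => K (q.1+1, q.2)) = fun q : ℕ × ℕ =>
      ((b-1)*w) * phi3Term b c w z q.1 q.2 from funext fun q => hKs q]
    exact tsum_mul_left
  have hMsum : ∑' p, M p = z * ∑' p : ℕ × ℕ, phi3Term (b-1) c w z p.1 p.2 := by
    rw [← Function.Injective.tsum_eq hMinj hMsupp]
    rw [show (fun q : ℕ × ℕ => M (q.1, q.2+1)) = fun q : ℕ × ℕ =>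
      z * phi3Term (b-1) c w z q.1 q.2 from funext fun q => hMs q]
    exact tsum_mul_left
  -- main sum identity
  have hmain : ∑' p : ℕ × ℕ, phi3Term (b-1) (c-2) w z p.1 p.2 =
      (c-2) * ∑' p : ℕ × ℕ, phi3Term (b-1) (c-1) w z p.1 p.2 +
      (((b-1)*w) * ∑' p : ℕ × ℕ, phi3Term b c w z p.1 p.2 +
        z * ∑' p : ℕ × ℕ, phi3Term (b-1) c w z p.1 p.2) := by
    calc ∑' p : ℕ × ℕ, phi3Term (b-1) (c-2) w z p.1 p.2
        = ∑' p : ℕ × ℕ, ((c-2) * phi3Term (b-1) (c-1) w z p.1 p.2 + (K p + M p)) :=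
          tsum_congr hpt
      _ = (∑' p : ℕ × ℕ, (c-2) * phi3Term (b-1) (c-1) w z p.1 p.2) +
            ∑' p : ℕ × ℕ, (K p + M p) :=
          Summable.tsum_add (S2.mul_left _) (hKsummable.add hMsummable)
      _ = (c-2) * (∑' p : ℕ × ℕ, phi3Term (b-1) (c-1) w z p.1 p.2) +
            ((∑' p, K p) + ∑' p, M p) := by
          rw [tsum_mul_left, Summable.tsum_add hKsummable hMsummable]
      _ = _ := by rw [hKsum, hMsum]
  rw [hPhi b c S4, hPhi (b-1) (c-2) S1, hPhi (b-1) (c-1) S2, hPhi (b-1) c S3, hmain]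
  field_simp
  ring
end

section
/- For a > 0, b ≥ 0, and any positive integer m, the generalized Marcum-Q function satisfies Q_m(a,b) = 1 − Q_{1−m}(b,a), where for non-positive integer order n the function Q_n is defined by the same integral formula Q_n(a,b) = ∫_b^∞ (x^n / a^{n−1}) exp(−(a²+x²)/2) I_{n−1}(ax) dx with I_{n−1} = I_{1−n} the modified Bessel function of integer order. -/
open scoped BigOperators
open MeasureTheory

namespace marcumAux
open MeasureTheory Set Filter


lemma myIntOn (n : ℕ) {c : ℝ} (hc : 0 ≤ c) :
    IntegrableOn (fun x : ℝ => x ^ n * Real.exp (-x ^ 2 / 2)) (Ioi c) := by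
  have h := integrableOn_rpow_mul_exp_neg_mul_sq (b := 1/2) (by norm_num)
    (s := n) (by exact lt_of_lt_of_le neg_one_lt_zero (Nat.cast_nonneg n))
  have he : (fun x : ℝ => x ^ (n : ℝ) * Real.exp (-(1/2) * x ^ 2))
      = fun x : ℝ => x ^ n * Real.exp (-x ^ 2 / 2) := by
    funext x
    rw [Real.rpow_natCast, show -(1/2 : ℝ) * x ^ 2 = -x ^ 2 / 2 by ring]
  rw [he] at h
  exact h.mono_set (Ioi_subset_Ioi hc)

lemma myTendsto (k : ℕ) :
    Tendsto (fun x : ℝ => x ^ k * Real.exp (-x ^ 2 / 2)) atTop (nhds 0) := by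
  have h3 : Tendsto (fun x : ℝ => (1/2) * x) atTop atTop :=
    Tendsto.const_mul_atTop (by norm_num) tendsto_id
  have h2 : Tendsto (fun x : ℝ => Real.exp (-(1/2) * x)) atTop (nhds 0) := by
    refine (Real.tendsto_exp_neg_atTop_nhds_zero.comp h3).congr fun x => ?_
    simp [Function.comp, neg_mul]
  have h := (rpow_mul_exp_neg_mul_sq_isLittleO_exp_neg (b := 1/2) (by norm_num)
    (k : ℝ)).trans_tendsto h2
  have he : (fun x : ℝ => x ^ (k : ℝ) * Real.exp (-(1/2) * x ^ 2))
      = fun x : ℝ => x ^ k * Real.exp (-x ^ 2 / 2) := by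
    funext x
    rw [Real.rpow_natCast, show -(1/2 : ℝ) * x ^ 2 = -x ^ 2 / 2 by ring]
  rwa [he] at h

lemma expDeriv (x : ℝ) : HasDerivAt (fun y : ℝ => Real.exp (-y ^ 2 / 2))
    (Real.exp (-x ^ 2 / 2) * (-x)) x := by
  have h1 : HasDerivAt (fun y : ℝ => -y ^ 2 / 2) (-x) x := by
    have := ((hasDerivAt_pow 2 x).neg).div_const 2
    simpa using this.congr_deriv (by push_cast; ring)
  exact h1.exp

lemma myJ (n : ℕ) {c : ℝ} (hc : 0 ≤ c) :
    ∫ x in Ioi c, x ^ (2 * n + 1) * Real.exp (-x ^ 2 / 2)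
      = 2 ^ n * (Nat.factorial n) * Real.exp (-c ^ 2 / 2) *
        ∑ i ∈ Finset.range (n + 1), (c ^ 2 / 2) ^ i / (Nat.factorial i) := by
  induction n with
  | zero =>
      have key : ∫ x in Ioi c, x ^ (2 * 0 + 1) * Real.exp (-x ^ 2 / 2)
          = 0 - (-Real.exp (-c ^ 2 / 2)) := by
        refine integral_Ioi_of_hasDerivAt_of_tendsto'
          (f := fun y => -Real.exp (-y ^ 2 / 2)) (fun x _ => ?_) (myIntOn 1 hc) ?_
        · have := (expDeriv x).neg
          exact this.congr_deriv (by ring)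
        · simpa using (myTendsto 0).neg.congr (by intro x; simp)
      simp only [key]
      simp [Nat.factorial]
  | succ n ih =>
      have hder : ∀ x ∈ Ici c, HasDerivAt (fun y : ℝ => -(y ^ (2 * n + 2) * Real.exp (-y ^ 2 / 2)))
          (x ^ (2 * n + 3) * Real.exp (-x ^ 2 / 2)
            - ((2 * n + 2 : ℕ) : ℝ) * (x ^ (2 * n + 1) * Real.exp (-x ^ 2 / 2))) x := by
        intro x _
        have h := ((hasDerivAt_pow (2 * n + 2) x).mul (expDeriv x)).neg
        refine h.congr_deriv ?_
        have h1 : 2 * n + 2 - 1 = 2 * n + 1 := by omega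
        rw [h1]
        push_cast
        ring
      have hint : IntegrableOn (fun x : ℝ => x ^ (2 * n + 3) * Real.exp (-x ^ 2 / 2)
          - ((2 * n + 2 : ℕ) : ℝ) * (x ^ (2 * n + 1) * Real.exp (-x ^ 2 / 2))) (Ioi c) :=
        (myIntOn (2 * n + 3) hc).sub ((myIntOn (2 * n + 1) hc).const_mul _)
      have htend : Tendsto (fun y : ℝ => -(y ^ (2 * n + 2) * Real.exp (-y ^ 2 / 2)))
          atTop (nhds 0) := by simpa using (myTendsto (2 * n + 2)).neg
      have key := integral_Ioi_of_hasDerivAt_of_tendsto' hder hint htend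
      rw [integral_sub (myIntOn (2 * n + 3) hc) ((myIntOn (2 * n + 1) hc).const_mul _),
        integral_const_mul] at key
      have key2 : ∫ x in Ioi c, x ^ (2 * (n + 1) + 1) * Real.exp (-x ^ 2 / 2)
          = c ^ (2 * n + 2) * Real.exp (-c ^ 2 / 2)
            + ((2 * n + 2 : ℕ) : ℝ) * ∫ x in Ioi c, x ^ (2 * n + 1) * Real.exp (-x ^ 2 / 2) := by
        have h23 : 2 * (n + 1) + 1 = 2 * n + 3 := by omega
        rw [h23]; linarith [key]
      have hfac : ((n + 1).factorial : ℝ) = (n + 1) * n.factorial := by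
        rw [Nat.factorial_succ]; push_cast; ring
      have hfne : (n.factorial : ℝ) ≠ 0 := Nat.cast_ne_zero.mpr n.factorial_ne_zero
      have harith : ∀ S E : ℝ, c ^ (2 * n + 2) * E
            + ((2 * n + 2 : ℕ) : ℝ) * (2 ^ n * (n.factorial : ℝ) * E * S)
          = 2 ^ (n + 1) * ((n + 1).factorial : ℝ) * E
            * (S + (c ^ 2 / 2) ^ (n + 1) / ((n + 1).factorial : ℝ)) := by
        intro S E
        have hpow : ((c : ℝ) ^ 2 / 2) ^ (n + 1) * 2 ^ (n + 1) = c ^ (2 * n + 2) := by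
          rw [div_pow, div_mul_cancel₀ _ (by positivity : (2:ℝ) ^ (n+1) ≠ 0), ← pow_mul]
          ring
        have hne : ((n : ℝ) + 1) * (n.factorial : ℝ) ≠ 0 :=
          mul_ne_zero (by positivity) hfne
        have hdiv : (c ^ 2 / 2) ^ (n + 1) / (((n : ℝ) + 1) * (n.factorial : ℝ))
            * (((n : ℝ) + 1) * (n.factorial : ℝ)) = (c ^ 2 / 2) ^ (n + 1) :=
          div_mul_cancel₀ _ hne
        rw [hfac]
        push_cast
        linear_combination (-((2:ℝ) ^ (n+1) * E)) * hdiv - E * hpow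
      rw [key2, ih]
      conv_rhs => rw [Finset.sum_range_succ]
      exact harith _ _


lemma exp_tsum (x : ℝ) : Real.exp x = ∑' n : ℕ, x ^ n / n.factorial := by
  rw [Real.exp_eq_exp_ℝ, NormedSpace.exp_eq_tsum_div]

lemma lemC (m : ℕ) {X Y : ℝ} (hX : 0 ≤ X) (hY : 0 ≤ Y) :
    (∑' k : ℕ, (X ^ k / k.factorial * ∑ i ∈ Finset.range (k + m), Y ^ i / i.factorial))
      + (∑' j : ℕ, (Y ^ (j + m) / (j + m).factorial
          * ∑ k ∈ Finset.range (j + 1), X ^ k / k.factorial))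
      = Real.exp X * Real.exp Y := by
  classical
  set f : ℕ × ℕ → ℝ := fun p => X ^ p.1 / p.1.factorial * (Y ^ p.2 / p.2.factorial) with hfdef
  set g : ℕ × ℕ → ℝ := fun p => if p.2 < p.1 + m then f p else 0 with hgdef
  set h : ℕ × ℕ → ℝ := fun p => if p.2 < p.1 + m then 0 else f p with hhdef
  have hXs : Summable (fun k : ℕ => X ^ k / k.factorial) := Real.summable_pow_div_factorial X
  have hYs : Summable (fun i : ℕ => Y ^ i / i.factorial) := Real.summable_pow_div_factorial Y
  have hfnn : ∀ p, 0 ≤ f p := fun p => by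
    simp only [hfdef]; positivity
  have hf : Summable f :=
    hXs.mul_of_nonneg hYs (fun k => by positivity) (fun i => by positivity)
  have hg : Summable g := by
    refine Summable.of_nonneg_of_le (f := f) (g := g) (fun p => ?_) (fun p => ?_) hf
    · simp only [hgdef]; split_ifs; exacts [hfnn p, le_rfl]
    · simp only [hgdef]; split_ifs; exacts [le_rfl, hfnn p]
  have hh : Summable h := by
    refine Summable.of_nonneg_of_le (f := f) (g := h) (fun p => ?_) (fun p => ?_) hf
    · simp only [hhdef]; split_ifs; exacts [le_rfl, hfnn p]
    · simp only [hhdef]; split_ifs; exacts [hfnn p, le_rfl]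
  have hsum : ∑' p, g p + ∑' p, h p = ∑' p, f p := by
    rw [← Summable.tsum_add hg hh]
    refine tsum_congr fun p => ?_
    simp only [hgdef, hhdef]; split_ifs <;> simp
  have hftot : ∑' p : ℕ × ℕ, f p = Real.exp X * Real.exp Y := by
    rw [Summable.tsum_prod' hf (fun k => by simp only [hfdef]; exact hYs.mul_left _)]
    have : ∀ k : ℕ, ∑' i : ℕ, f (k, i) = X ^ k / k.factorial * ∑' i : ℕ, Y ^ i / i.factorial :=
      fun k => by simp only [hfdef]; exact tsum_mul_left
    rw [tsum_congr this, tsum_mul_right, ← exp_tsum, ← exp_tsum]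
  have hA : ∑' p : ℕ × ℕ, g p
      = ∑' k : ℕ, (X ^ k / k.factorial * ∑ i ∈ Finset.range (k + m), Y ^ i / i.factorial) := by
    rw [Summable.tsum_prod' hg (fun k => summable_of_ne_finset_zero (s := Finset.range (k + m))
      (fun i hi => by simp only [hgdef]; exact if_neg (by simpa [Finset.mem_range] using hi)))]
    refine tsum_congr fun k => ?_
    rw [tsum_eq_sum (s := Finset.range (k + m))
      (fun i hi => by simp only [hgdef]; exact if_neg (by simpa [Finset.mem_range] using hi)),
      Finset.mul_sum]
    refine Finset.sum_congr rfl fun i hi => ?_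
    simp only [hgdef, hfdef]
    rw [if_pos (by simpa [Finset.mem_range] using hi)]
  have he : Function.Injective (fun q : ℕ × ℕ => (q.2, q.1 + m)) := by
    intro q1 q2 hq
    simp only [Prod.ext_iff] at hq ⊢
    omega
  have hsupp : Function.support h ⊆ Set.range (fun q : ℕ × ℕ => (q.2, q.1 + m)) := by
    rintro ⟨p1, p2⟩ hp
    simp only [hhdef, Function.mem_support] at hp
    by_cases hlt : p2 < p1 + m
    · simp [hlt] at hp
    · refine ⟨(p2 - m, p1), ?_⟩
      have h2 : p2 - m + m = p2 := by omega
      simp [h2]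
  have hcomp : Summable (fun q : ℕ × ℕ => h (q.2, q.1 + m)) := hh.comp_injective he
  have hB : ∑' p : ℕ × ℕ, h p
      = ∑' j : ℕ, (Y ^ (j + m) / (j + m).factorial
          * ∑ k ∈ Finset.range (j + 1), X ^ k / k.factorial) := by
    rw [← he.tsum_eq hsupp]
    rw [Summable.tsum_prod' hcomp (fun j => summable_of_ne_finset_zero (s := Finset.range (j + 1))
      (fun k hk => by
        simp only [hhdef]
        exact if_pos (by simp only [Finset.mem_range] at hk; omega)))]
    refine tsum_congr fun j => ?_
    rw [tsum_eq_sum (s := Finset.range (j + 1))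
      (fun k hk => by
        simp only [hhdef]
        exact if_pos (by simp only [Finset.mem_range] at hk; omega))]
    rw [Finset.mul_sum]
    refine Finset.sum_congr rfl fun k hk => ?_
    simp only [hhdef, hfdef]
    rw [if_neg (by simp only [Finset.mem_range] at hk; omega)]
    ring
  rw [← hA, ← hB, hsum, hftot]


lemma expPartial_le_one {Y : ℝ} (hY : 0 ≤ Y) (n : ℕ) :
    Real.exp (-Y) * ∑ i ∈ Finset.range n, Y ^ i / (Nat.factorial i) ≤ 1 := by
  calc Real.exp (-Y) * ∑ i ∈ Finset.range n, Y ^ i / (Nat.factorial i)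
      ≤ Real.exp (-Y) * Real.exp Y :=
        mul_le_mul_of_nonneg_left (Real.sum_le_exp_of_nonneg hY n) (Real.exp_pos _).le
    _ = 1 := by rw [← Real.exp_add]; simp

lemma lemA (p : ℕ) {a b : ℝ} (ha : 0 < a) (hb : 0 ≤ b) :
    marcumQ ((p : ℤ) + 1) a b
      = Real.exp (-a ^ 2 / 2) * Real.exp (-b ^ 2 / 2) *
        ∑' k : ℕ, ((a ^ 2 / 2) ^ k / (Nat.factorial k)
          * ∑ i ∈ Finset.range (k + p + 1), (b ^ 2 / 2) ^ i / (Nat.factorial i)) := by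
  have hfne : ∀ n : ℕ, ((Nat.factorial n : ℝ)) ≠ 0 :=
    fun n => Nat.cast_ne_zero.mpr n.factorial_ne_zero
  set C : ℕ → ℝ := fun k => Real.exp (-a ^ 2 / 2) * a ^ (2 * k) /
    (2 ^ (2 * k + p) * (Nat.factorial k) * (Nat.factorial (k + p))) with hC
  have hCnn : ∀ k, 0 ≤ C k := fun k => by rw [hC]; positivity
  -- pointwise identity
  have hpt : ∀ x : ℝ, x ∈ Ioi b →
      x ^ ((p : ℤ) + 1) / a ^ ((p : ℤ) + 1 - 1) * Real.exp (-(a ^ 2 + x ^ 2) / 2)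
        * besselI ((p : ℤ) + 1 - 1) (a * x)
      = ∑' k : ℕ, C k * (x ^ (2 * (k + p) + 1) * Real.exp (-x ^ 2 / 2)) := by
    intro x hx
    have hx0 : 0 < x := lt_of_le_of_lt hb hx
    have h1 : ((p : ℤ) + 1 - 1) = ((p : ℕ) : ℤ) := by ring
    have h2 : ((p : ℤ) + 1) = (((p + 1 : ℕ)) : ℤ) := by push_cast; ring
    rw [h1, h2, zpow_natCast, zpow_natCast, besselI]
    simp only [Int.natAbs_natCast]
    rw [← tsum_mul_left]
    refine tsum_congr fun k => ?_
    rw [hC]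
    have hexp : Real.exp (-(a ^ 2 + x ^ 2) / 2) = Real.exp (-a ^ 2 / 2) * Real.exp (-x ^ 2 / 2) := by
      rw [← Real.exp_add]; congr 1; ring
    rw [hexp]
    rw [div_pow, mul_pow]
    field_simp
    ring
  have hInt : ∀ k : ℕ, Integrable
      (fun x : ℝ => C k * (x ^ (2 * (k + p) + 1) * Real.exp (-x ^ 2 / 2)))
      (volume.restrict (Ioi b)) := fun k => (myIntOn (2 * (k + p) + 1) hb).const_mul _
  have hval : ∀ k : ℕ, ∫ x in Ioi b, C k * (x ^ (2 * (k + p) + 1) * Real.exp (-x ^ 2 / 2))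
      = C k * (2 ^ (k + p) * (Nat.factorial (k + p)) * Real.exp (-b ^ 2 / 2) *
          ∑ i ∈ Finset.range (k + p + 1), (b ^ 2 / 2) ^ i / (Nat.factorial i)) := by
    intro k
    rw [integral_const_mul, myJ (k + p) hb]
  have hCk : ∀ k : ℕ, C k * (2 ^ (k + p) * ((Nat.factorial (k + p) : ℝ)))
      = Real.exp (-a ^ 2 / 2) * ((a ^ 2 / 2) ^ k / (Nat.factorial k)) := by
    intro k
    rw [hC]
    have h2 : ((a : ℝ) ^ 2 / 2) ^ k = a ^ (2 * k) / 2 ^ k := by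
      rw [div_pow, ← pow_mul]
    rw [h2]
    field_simp
    ring
  have hnorm : ∀ k : ℕ, ∫ x in Ioi b, ‖C k * (x ^ (2 * (k + p) + 1) * Real.exp (-x ^ 2 / 2))‖
      = ∫ x in Ioi b, C k * (x ^ (2 * (k + p) + 1) * Real.exp (-x ^ 2 / 2)) := by
    intro k
    refine setIntegral_congr_fun measurableSet_Ioi fun x hx => ?_
    have hx0 : (0 : ℝ) ≤ x := le_of_lt (lt_of_le_of_lt hb hx)
    have := hCnn k
    exact Real.norm_of_nonneg (by positivity)
  have hSum : Summable fun k : ℕ =>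
      ∫ x in Ioi b, ‖C k * (x ^ (2 * (k + p) + 1) * Real.exp (-x ^ 2 / 2))‖ := by
    refine Summable.of_nonneg_of_le
      (g := fun k : ℕ => ∫ x in Ioi b, ‖C k * (x ^ (2 * (k + p) + 1) * Real.exp (-x ^ 2 / 2))‖)
      (f := fun k : ℕ => Real.exp (-a ^ 2 / 2) * ((a ^ 2 / 2) ^ k / (Nat.factorial k)))
      (fun k => integral_nonneg fun x => norm_nonneg _) (fun k => ?_)
      ((Real.summable_pow_div_factorial (a ^ 2 / 2)).mul_left _)
    rw [hnorm k, hval k]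
    calc C k * (2 ^ (k + p) * (Nat.factorial (k + p)) * Real.exp (-b ^ 2 / 2) *
          ∑ i ∈ Finset.range (k + p + 1), (b ^ 2 / 2) ^ i / (Nat.factorial i))
        = (C k * (2 ^ (k + p) * (Nat.factorial (k + p)))) * (Real.exp (-b ^ 2 / 2) *
          ∑ i ∈ Finset.range (k + p + 1), (b ^ 2 / 2) ^ i / (Nat.factorial i)) := by ring
      _ ≤ (Real.exp (-a ^ 2 / 2) * ((a ^ 2 / 2) ^ k / (Nat.factorial k))) * 1 := by
          rw [hCk k]
          refine mul_le_mul_of_nonneg_left ?_ (by positivity)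
          have : ((-b ^ 2 / 2 : ℝ)) = -(b ^ 2 / 2) := by ring
          rw [this]
          exact expPartial_le_one (by positivity) _
      _ = Real.exp (-a ^ 2 / 2) * ((a ^ 2 / 2) ^ k / (Nat.factorial k)) := mul_one _
  have hswap := integral_tsum_of_summable_integral_norm hInt hSum
  rw [marcumQ, setIntegral_congr_fun measurableSet_Ioi hpt, ← hswap]
  rw [← tsum_mul_left]
  refine tsum_congr fun k => ?_
  rw [hval k]
  linear_combination (Real.exp (-b ^ 2 / 2) *
    ∑ i ∈ Finset.range (k + p + 1), (b ^ 2 / 2) ^ i / (Nat.factorial i)) * hCk k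


lemma lemB (p : ℕ) {a b : ℝ} (ha : 0 < a) (hb : 0 ≤ b) :
    marcumQ (1 - ((p : ℤ) + 1)) b a
      = Real.exp (-b ^ 2 / 2) * Real.exp (-a ^ 2 / 2) *
        ∑' j : ℕ, ((b ^ 2 / 2) ^ (j + p + 1) / (Nat.factorial (j + p + 1))
          * ∑ k ∈ Finset.range (j + 1), (a ^ 2 / 2) ^ k / (Nat.factorial k)) := by
  have hfne : ∀ n : ℕ, ((Nat.factorial n : ℝ)) ≠ 0 :=
    fun n => Nat.cast_ne_zero.mpr n.factorial_ne_zero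
  rcases eq_or_lt_of_le hb with hb0 | hb0
  · -- b = 0
    subst hb0
    have hz : ((0 : ℝ)) ^ (1 - ((p : ℤ) + 1) - 1) = 0 :=
      zero_zpow _ (by intro h; omega)
    have hpt0 : ∀ x : ℝ, x ∈ Ioi a →
        x ^ (1 - ((p : ℤ) + 1)) / (0 : ℝ) ^ (1 - ((p : ℤ) + 1) - 1)
          * Real.exp (-((0:ℝ) ^ 2 + x ^ 2) / 2)
          * besselI (1 - ((p : ℤ) + 1) - 1) ((0:ℝ) * x) = 0 := by
      intro x _
      rw [hz, div_zero, zero_mul, zero_mul]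
    rw [marcumQ, setIntegral_congr_fun measurableSet_Ioi hpt0, integral_zero]
    have : ∀ j : ℕ, ((0:ℝ) ^ 2 / 2) ^ (j + p + 1) / (Nat.factorial (j + p + 1))
        * ∑ k ∈ Finset.range (j + 1), (a ^ 2 / 2) ^ k / (Nat.factorial k) = 0 := by
      intro j
      rw [show ((0:ℝ) ^ 2 / 2) = 0 by norm_num, zero_pow (by omega), zero_div, zero_mul]
    rw [tsum_congr this, tsum_zero, mul_zero]
  -- b > 0
  set D : ℕ → ℝ := fun j => Real.exp (-b ^ 2 / 2) * b ^ (2 * j + 2 * p + 2) /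
    (2 ^ (2 * j + p + 1) * (Nat.factorial j) * (Nat.factorial (j + p + 1))) with hD
  have hDnn : ∀ j, 0 ≤ D j := fun j => by rw [hD]; positivity
  have hpt : ∀ x : ℝ, x ∈ Ioi a →
      x ^ (1 - ((p : ℤ) + 1)) / b ^ (1 - ((p : ℤ) + 1) - 1) * Real.exp (-(b ^ 2 + x ^ 2) / 2)
        * besselI (1 - ((p : ℤ) + 1) - 1) (b * x)
      = ∑' j : ℕ, D j * (x ^ (2 * j + 1) * Real.exp (-x ^ 2 / 2)) := by
    intro x hx
    have hx0 : 0 < x := lt_trans ha hx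
    have h1 : (1 - ((p : ℤ) + 1)) = -((p : ℕ) : ℤ) := by ring
    have h2 : (1 - ((p : ℤ) + 1) - 1) = -(((p + 1 : ℕ)) : ℤ) := by push_cast; ring
    rw [h2, h1, zpow_neg, zpow_natCast, zpow_neg, zpow_natCast, besselI]
    simp only [Int.natAbs_neg, Int.natAbs_natCast]
    rw [← tsum_mul_left]
    refine tsum_congr fun j => ?_
    have hnat : j + (p + 1) = j + p + 1 := rfl
    have hnat2 : 2 * j + (p + 1) = 2 * j + p + 1 := rfl
    rw [hnat, hnat2, hD]
    have hexp : Real.exp (-(b ^ 2 + x ^ 2) / 2)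
        = Real.exp (-b ^ 2 / 2) * Real.exp (-x ^ 2 / 2) := by
      rw [← Real.exp_add]; congr 1; ring
    rw [hexp, div_pow, mul_pow]
    field_simp
    ring
  have hInt : ∀ j : ℕ, Integrable
      (fun x : ℝ => D j * (x ^ (2 * j + 1) * Real.exp (-x ^ 2 / 2)))
      (volume.restrict (Ioi a)) := fun j => (myIntOn (2 * j + 1) ha.le).const_mul _
  have hval : ∀ j : ℕ, ∫ x in Ioi a, D j * (x ^ (2 * j + 1) * Real.exp (-x ^ 2 / 2))
      = D j * (2 ^ j * (Nat.factorial j) * Real.exp (-a ^ 2 / 2) *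
          ∑ k ∈ Finset.range (j + 1), (a ^ 2 / 2) ^ k / (Nat.factorial k)) := by
    intro j
    rw [integral_const_mul, myJ j ha.le]
  have hDk : ∀ j : ℕ, D j * (2 ^ j * ((Nat.factorial j : ℝ)))
      = Real.exp (-b ^ 2 / 2) * ((b ^ 2 / 2) ^ (j + p + 1) / (Nat.factorial (j + p + 1))) := by
    intro j
    rw [hD]
    have h2 : ((b : ℝ) ^ 2 / 2) ^ (j + p + 1) = b ^ (2 * j + 2 * p + 2) / 2 ^ (j + p + 1) := by
      rw [div_pow, ← pow_mul]
      congr 2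
      ring
    rw [h2]
    field_simp
    ring
  have hnorm : ∀ j : ℕ, ∫ x in Ioi a, ‖D j * (x ^ (2 * j + 1) * Real.exp (-x ^ 2 / 2))‖
      = ∫ x in Ioi a, D j * (x ^ (2 * j + 1) * Real.exp (-x ^ 2 / 2)) := by
    intro j
    refine setIntegral_congr_fun measurableSet_Ioi fun x hx => ?_
    have hx0 : (0 : ℝ) ≤ x := le_of_lt (lt_trans ha hx)
    have := hDnn j
    exact Real.norm_of_nonneg (by positivity)
  have hSum : Summable fun j : ℕ =>
      ∫ x in Ioi a, ‖D j * (x ^ (2 * j + 1) * Real.exp (-x ^ 2 / 2))‖ := by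
    have hsum0 : Summable fun j : ℕ =>
        Real.exp (-b ^ 2 / 2) * ((b ^ 2 / 2) ^ (j + p + 1) / (Nat.factorial (j + p + 1))) := by
      refine Summable.mul_left _ ?_
      exact (Real.summable_pow_div_factorial (b ^ 2 / 2)).comp_injective
        (add_left_injective (p + 1))
    refine Summable.of_nonneg_of_le
      (fun j => integral_nonneg fun x => norm_nonneg _) (fun j => ?_) hsum0
    rw [hnorm j, hval j]
    calc D j * (2 ^ j * (Nat.factorial j) * Real.exp (-a ^ 2 / 2) *
          ∑ k ∈ Finset.range (j + 1), (a ^ 2 / 2) ^ k / (Nat.factorial k))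
        = (D j * (2 ^ j * (Nat.factorial j))) * (Real.exp (-a ^ 2 / 2) *
          ∑ k ∈ Finset.range (j + 1), (a ^ 2 / 2) ^ k / (Nat.factorial k)) := by ring
      _ ≤ (Real.exp (-b ^ 2 / 2) * ((b ^ 2 / 2) ^ (j + p + 1) / (Nat.factorial (j + p + 1)))) * 1 := by
          rw [hDk j]
          refine mul_le_mul_of_nonneg_left ?_ (by positivity)
          have h3 : ((-a ^ 2 / 2 : ℝ)) = -(a ^ 2 / 2) := by ring
          rw [h3]
          exact expPartial_le_one (by positivity) _
      _ = _ := mul_one _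
  have hswap := integral_tsum_of_summable_integral_norm hInt hSum
  rw [marcumQ, setIntegral_congr_fun measurableSet_Ioi hpt, ← hswap]
  rw [← tsum_mul_left]
  refine tsum_congr fun j => ?_
  rw [hval j]
  linear_combination (Real.exp (-a ^ 2 / 2) *
    ∑ k ∈ Finset.range (j + 1), (a ^ 2 / 2) ^ k / (Nat.factorial k)) * hDk j

end marcumAux

/-- Q_m(a,b) = 1 − Q_{1−m}(b,a) for positive integer m. -/
theorem marcumQ_neg_order (m : ℕ) (hm : 0 < m) (a b : ℝ) (ha : 0 < a) (hb : 0 ≤ b) :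
    marcumQ (m : ℤ) a b = 1 - marcumQ (1 - (m : ℤ)) b a := by
  obtain ⟨p, rfl⟩ : ∃ p, m = p + 1 := ⟨m - 1, by omega⟩
  have hcast : ((p + 1 : ℕ) : ℤ) = (p : ℤ) + 1 := by push_cast; ring
  rw [hcast]
  have hA := marcumAux.lemA p ha hb
  have hB := marcumAux.lemB p ha hb
  have hC := marcumAux.lemC (p + 1) (by positivity : (0:ℝ) ≤ a ^ 2 / 2)
    (by positivity : (0:ℝ) ≤ b ^ 2 / 2)
  simp only [← add_assoc] at hC
  have hkey : Real.exp (-a ^ 2 / 2) * Real.exp (-b ^ 2 / 2)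
      * (Real.exp (a ^ 2 / 2) * Real.exp (b ^ 2 / 2)) = 1 := by
    rw [show ((-a ^ 2 / 2 : ℝ)) = -(a ^ 2 / 2) by ring,
      show ((-b ^ 2 / 2 : ℝ)) = -(b ^ 2 / 2) by ring, Real.exp_neg, Real.exp_neg]
    field_simp
  rw [hA, hB]
  linear_combination (Real.exp (-a ^ 2 / 2) * Real.exp (-b ^ 2 / 2)) * hC + hkey
end

section
/- For a > 0, b > 0, and any integer m, the generalized Marcum-Q function satisfies Q_m(a,b) = (a²/2)^{1−m} · exp(−(a²+b²)/2) · Φ̃₃(1, 2−m; a²/2, a²b²/4). -/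
set_option maxHeartbeats 1000000
set_option linter.unusedTactic false
set_option linter.unreachableTactic false
set_option linter.unusedVariables false

open scoped BigOperators
open MeasureTheory

section
variable {p : ℕ} {b : ℝ}

private lemma tendstoG (p : ℕ) :
    Filter.Tendsto (fun y : ℝ => -(∑ l ∈ Finset.range (p+1),
        ((2:ℝ)^p * Nat.factorial p / (2^l * Nat.factorial l)) * (y^(2*l) * Real.exp (-(y^2)/2))))
      Filter.atTop (nhds 0) := by
  have h0 : (0:ℝ) = -(∑ l ∈ Finset.range (p+1),
      ((2:ℝ)^p * Nat.factorial p / (2^l * Nat.factorial l)) * 0) := by simp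
  rw [h0]
  apply Filter.Tendsto.neg
  apply tendsto_finset_sum
  intro l _
  apply Filter.Tendsto.const_mul
  have hsq : Filter.Tendsto (fun y : ℝ => y^2/2) Filter.atTop Filter.atTop :=
    (Filter.tendsto_pow_atTop (two_ne_zero)).atTop_div_const (by norm_num)
  have hcomp := (Real.tendsto_pow_mul_exp_neg_atTop_nhds_zero l).comp hsq
  have : (fun y : ℝ => y^(2*l) * Real.exp (-(y^2)/2))
      = fun y : ℝ => 2^l * ((y^2/2)^l * Real.exp (-(y^2/2))) := by
    funext y
    rw [pow_mul, div_pow]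
    have h2l : ((2:ℝ)^l) ≠ 0 := by positivity
    field_simp
  rw [this]
  have h02 : (0:ℝ) = 2^l * 0 := by simp
  rw [h02]
  apply Filter.Tendsto.const_mul
  exact hcomp.congr (fun y => by simp [Function.comp])

private lemma tele (x : ℝ) (p : ℕ) :
    ∑ l ∈ Finset.range (p+1),
      (x^(2*l+1) - (2*l : ℝ)*x^(2*l-1)) / (2^l * Nat.factorial l)
      = x^(2*p+1)/(2^p * Nat.factorial p) := by
  induction p with
  | zero => simp
  | succ p ih =>
    rw [Finset.sum_range_succ, ih]
    have h1 : 2*(p+1)-1 = 2*p+1 := by omega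
    have h2 : 2*(p+1)+1 = 2*p+3 := by omega
    rw [h1, h2, Nat.factorial_succ]
    have hp : (Nat.factorial p : ℝ) ≠ 0 := Nat.cast_ne_zero.2 (Nat.factorial_ne_zero p)
    have h2p : (2:ℝ)^p ≠ 0 := by positivity
    push_cast
    field_simp
    ring

private lemma hderivG (p : ℕ) (x : ℝ) :
    HasDerivAt (fun y : ℝ => -(∑ l ∈ Finset.range (p+1),
        ((2:ℝ)^p * Nat.factorial p / (2^l * Nat.factorial l)) * (y^(2*l) * Real.exp (-(y^2)/2))))
      (x^(2*p+1) * Real.exp (-(x^2)/2)) x := by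
  have hE : HasDerivAt (fun y : ℝ => Real.exp (-(y^2)/2)) (Real.exp (-(x^2)/2) * (-x)) x := by
    have h1 : HasDerivAt (fun y : ℝ => -(y^2)/2) (-x) x := by
      have := ((hasDerivAt_pow 2 x).fun_neg).div_const 2
      refine this.congr_deriv ?_
      push_cast
      ring
    exact h1.exp
  have hsum : HasDerivAt (fun y : ℝ => ∑ l ∈ Finset.range (p+1),
      ((2:ℝ)^p * Nat.factorial p / (2^l * Nat.factorial l)) * (y^(2*l) * Real.exp (-(y^2)/2)))
      (∑ l ∈ Finset.range (p+1),
        ((2:ℝ)^p * Nat.factorial p / (2^l * Nat.factorial l)) *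
          ((2*l : ℝ) * x^(2*l-1) * Real.exp (-(x^2)/2) + x^(2*l) * (Real.exp (-(x^2)/2) * (-x)))) x := by
    apply HasDerivAt.fun_sum
    intro l _
    exact (((hasDerivAt_pow (2*l) x).mul hE).const_mul _).congr_deriv (by push_cast; ring)
  have := hsum.fun_neg
  refine this.congr_deriv ?_
  symm
  have key := tele x p
  have h2p : ((2:ℝ)^p * Nat.factorial p) ≠ 0 := by
    have : (Nat.factorial p : ℝ) ≠ 0 := Nat.cast_ne_zero.2 (Nat.factorial_ne_zero p)
    positivity
  calc x^(2*p+1) * Real.exp (-(x^2)/2)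
      = (2^p * Nat.factorial p) * (x^(2*p+1)/(2^p * Nat.factorial p)) * Real.exp (-(x^2)/2) := by
        field_simp
    _ = (2^p * Nat.factorial p) * (∑ l ∈ Finset.range (p+1),
          (x^(2*l+1) - (2*l : ℝ)*x^(2*l-1)) / (2^l * Nat.factorial l)) * Real.exp (-(x^2)/2) := by
        rw [key]
    _ = -∑ l ∈ Finset.range (p+1),
        ((2:ℝ)^p * Nat.factorial p / (2^l * Nat.factorial l)) *
          ((2*l : ℝ) * x^(2*l-1) * Real.exp (-(x^2)/2) + x^(2*l) * (Real.exp (-(x^2)/2) * (-x))) := by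
        rw [Finset.mul_sum, Finset.sum_mul, ← Finset.sum_neg_distrib]
        apply Finset.sum_congr rfl
        intro l hl
        have hl2 : ((2:ℝ)^l * Nat.factorial l) ≠ 0 := by
          have : (Nat.factorial l : ℝ) ≠ 0 := Nat.cast_ne_zero.2 (Nat.factorial_ne_zero l)
          positivity
        field_simp
        ring

private lemma intP (hb : 0 < b) (p : ℕ) :
    ∫ x in Set.Ioi b, x^(2*p+1) * Real.exp (-(x^2)/2)
      = 2^p * Nat.factorial p *
        (Real.exp (-(b^2)/2) * ∑ l ∈ Finset.range (p+1), (b^2/2)^l / Nat.factorial l) := by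
  have hderiv : ∀ x ∈ Set.Ici b, HasDerivAt (fun y : ℝ => -(∑ l ∈ Finset.range (p+1),
      ((2:ℝ)^p * Nat.factorial p / (2^l * Nat.factorial l)) * (y^(2*l) * Real.exp (-(y^2)/2))))
      (x^(2*p+1) * Real.exp (-(x^2)/2)) x := fun x _ => hderivG p x
  have hpos : ∀ x ∈ Set.Ioi b, 0 ≤ x^(2*p+1) * Real.exp (-(x^2)/2) := by
    intro x hx
    have : (0:ℝ) < x := lt_trans hb hx
    positivity
  rw [MeasureTheory.integral_Ioi_of_hasDerivAt_of_nonneg' hderiv hpos (tendstoG p)]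
  rw [zero_sub, neg_neg, Finset.mul_sum, Finset.mul_sum]
  apply Finset.sum_congr rfl
  intro l _
  have hl2 : ((2:ℝ)^l * Nat.factorial l) ≠ 0 := by
    have : (Nat.factorial l : ℝ) ≠ 0 := Nat.cast_ne_zero.2 (Nat.factorial_ne_zero l)
    positivity
  rw [div_pow, pow_mul]
  field_simp

private lemma intP_integrable (hb : 0 < b) (p : ℕ) :
    IntegrableOn (fun x : ℝ => x^(2*p+1) * Real.exp (-(x^2)/2)) (Set.Ioi b) := by
  have hderiv : ∀ x ∈ Set.Ici b, HasDerivAt (fun y : ℝ => -(∑ l ∈ Finset.range (p+1),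
      ((2:ℝ)^p * Nat.factorial p / (2^l * Nat.factorial l)) * (y^(2*l) * Real.exp (-(y^2)/2))))
      (x^(2*p+1) * Real.exp (-(x^2)/2)) x := fun x _ => hderivG p x
  have hpos : ∀ x ∈ Set.Ioi b, 0 ≤ x^(2*p+1) * Real.exp (-(x^2)/2) := by
    intro x hx
    have : (0:ℝ) < x := lt_trans hb hx
    positivity
  exact integrableOn_Ioi_deriv_of_nonneg' hderiv hpos (tendstoG p)

end

private noncomputable def Sterm (m : ℤ) (w z : ℝ) (s : ℕ) : ℝ :=
  (if 0 ≤ 1 - m + s then w ^ (1 - m + s).toNat / Nat.factorial (1 - m + s).toNat else 0)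
    * ∑ l ∈ Finset.range (s+1), z ^ l / Nat.factorial l

private noncomputable def eterm (m : ℤ) (w z : ℝ) : ℕ × ℕ → ℝ := fun kj =>
  if 0 ≤ 1 - m + kj.1 + kj.2 then
    w ^ kj.1 * (w*z) ^ kj.2 /
      (Nat.factorial (1 - m + kj.1 + kj.2).toNat * Nat.factorial kj.2)
  else 0

private lemma eterm_nonneg (m : ℤ) {w z : ℝ} (hw : 0 ≤ w) (hz : 0 ≤ z) (kj : ℕ × ℕ) :
    0 ≤ eterm m w z kj := by
  unfold eterm
  split
  · positivity
  · exact le_refl 0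

private lemma phi3Term_eq (m : ℤ) (w z : ℝ) (k j : ℕ) :
    phi3Term 1 (2 - (m:ℝ)) w (w*z) k j = eterm m w z (k, j) := by
  unfold phi3Term eterm
  rw [ascPochhammer_eval_one]
  by_cases h : 0 ≤ 1 - m + k + j
  · rw [if_pos h]
    have hG : (2 - (m:ℝ) + k + j) = ((1 - m + k + j).toNat : ℝ) + 1 := by
      have h1 : ((1 - m + k + j).toNat : ℤ) = 1 - m + k + j := Int.toNat_of_nonneg h
      have h2 : (((1 - m + k + j).toNat : ℤ) : ℝ) = ((1 - m + k + j : ℤ) : ℝ) := by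
        exact_mod_cast congrArg (Int.cast : ℤ → ℝ) h1
      push_cast at h2 ⊢
      linarith
    rw [hG, Real.Gamma_nat_eq_factorial]
    have hk : (Nat.factorial k : ℝ) ≠ 0 := Nat.cast_ne_zero.2 (Nat.factorial_ne_zero k)
    have hn : (Nat.factorial (1 - m + k + j).toNat : ℝ) ≠ 0 :=
      Nat.cast_ne_zero.2 (Nat.factorial_ne_zero _)
    have hj : (Nat.factorial j : ℝ) ≠ 0 := Nat.cast_ne_zero.2 (Nat.factorial_ne_zero j)
    field_simp
  · rw [if_neg h]
    push_neg at h
    have h2 : 2 - m + (k:ℤ) + j ≤ 0 := by omega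
    set N : ℕ := (-(2 - m + k + j)).toNat with hN
    have hcast : (2 - (m:ℝ) + k + j) = -(N : ℝ) := by
      have h1 : (N : ℤ) = -(2 - m + k + j) := Int.toNat_of_nonneg (by omega)
      have h2 : ((N:ℤ) : ℝ) = ((-(2 - m + (k:ℤ) + j) : ℤ) : ℝ) := by exact_mod_cast congrArg (Int.cast : ℤ → ℝ) h1
      push_cast at h2 ⊢
      linarith
    rw [hcast, Real.Gamma_neg_nat_eq_zero, inv_zero]
    ring

private lemma eterm_le (m : ℤ) {w z : ℝ} (hw : 0 ≤ w) (hz : 0 ≤ z) (k j : ℕ) :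
    eterm m w z (k, j) ≤ w^k / Nat.factorial (k - (m-1).toNat) * ((w*z)^j / Nat.factorial j) := by
  unfold eterm
  split
  · rw [div_mul_div_comm]
    have hfac : (Nat.factorial (k - (m-1).toNat) : ℝ) ≤ Nat.factorial (1 - m + k + j).toNat := by
      exact_mod_cast Nat.factorial_le (by omega)
    gcongr
    all_goals first
      | positivity
      | exact hfac
      | exact Nat.cast_pos.2 (Nat.factorial_pos _)
  · positivity

private lemma eterm_summable (m : ℤ) {w z : ℝ} (hw : 0 ≤ w) (hz : 0 ≤ z) :
    Summable (eterm m w z) := by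
  set t := (m-1).toNat with ht
  have hB : Summable (fun k : ℕ => w^k / Nat.factorial (k - t) * Real.exp (w*z)) := by
    apply Summable.mul_right
    rw [← summable_nat_add_iff t]
    have : (fun n : ℕ => w^(n+t) / Nat.factorial (n + t - t))
        = fun n : ℕ => w^t * (w^n / Nat.factorial n) := by
      funext n
      rw [Nat.add_sub_cancel, pow_add]
      ring
    rw [this]
    exact (Real.summable_pow_div_factorial w).mul_left _
  have hrow : ∀ k : ℕ, Summable (fun j => eterm m w z (k, j)) := by
    intro k
    apply Summable.of_nonneg_of_le (fun j => eterm_nonneg m hw hz (k, j))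
      (fun j => eterm_le m hw hz k j)
    exact ((Real.summable_pow_div_factorial (w*z)).mul_left _)
  rw [summable_prod_of_nonneg (fun kj => eterm_nonneg m hw hz kj)]
  refine ⟨hrow, ?_⟩
  apply Summable.of_nonneg_of_le (fun k => tsum_nonneg (fun j => eterm_nonneg m hw hz (k, j)))
    (fun k => ?_) hB
  calc ∑' j, eterm m w z (k, j)
      ≤ ∑' j, w^k / Nat.factorial (k - t) * ((w*z)^j / Nat.factorial j) :=
        Summable.tsum_le_tsum (fun j => eterm_le m hw hz k j) (hrow k)
          ((Real.summable_pow_div_factorial (w*z)).mul_left _)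
    _ = w^k / Nat.factorial (k - t) * ∑' j, ((w*z)^j / Nat.factorial j) := tsum_mul_left
    _ ≤ w^k / Nat.factorial (k - t) * Real.exp (w*z) := by
        apply mul_le_mul_of_nonneg_left _ (by positivity)
        apply Real.tsum_le_of_sum_range_le (fun j => by positivity)
        intro n
        exact Real.sum_le_exp_of_nonneg (by positivity) n

private lemma antidiag_sum (m : ℤ) (w z : ℝ) (s : ℕ) :
    ∑ kj ∈ Finset.HasAntidiagonal.antidiagonal s, eterm m w z kj
      = (if 0 ≤ 1 - m + s then w ^ s / Nat.factorial (1 - m + s).toNat else 0)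
          * ∑ l ∈ Finset.range (s+1), z ^ l / Nat.factorial l := by
  rw [Finset.Nat.sum_antidiagonal_eq_sum_range_succ_mk]
  have hterm : ∀ k ∈ Finset.range (s+1), eterm m w z (k, s - k)
      = if 0 ≤ 1 - m + s then
          (w ^ s / Nat.factorial (1 - m + s).toNat) * (z^(s-k) / Nat.factorial (s-k)) else 0 := by
    intro k hk
    have hks : k ≤ s := Nat.lt_succ_iff.mp (Finset.mem_range.mp hk)
    unfold eterm
    have hcond : (1 - m + (k:ℤ) + ((s-k : ℕ):ℤ)) = 1 - m + s := by
      push_cast [Nat.cast_sub hks]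
      ring
    rw [hcond]
    split
    · have hpow : w ^ k * (w*z)^(s-k) = w^s * z^(s-k) := by
        rw [mul_pow, ← mul_assoc, ← pow_add, Nat.add_sub_cancel' hks]
      rw [hpow]
      have h1 : (Nat.factorial (1 - m + s).toNat : ℝ) ≠ 0 :=
        Nat.cast_ne_zero.2 (Nat.factorial_ne_zero _)
      have h2 : (Nat.factorial (s-k) : ℝ) ≠ 0 := Nat.cast_ne_zero.2 (Nat.factorial_ne_zero _)
      field_simp
      try ring
    · rfl
  rw [Finset.sum_congr rfl hterm]
  split
  · rw [← Finset.mul_sum]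
    congr 1
    have := Finset.sum_range_reflect (fun l => z^l / (Nat.factorial l : ℝ)) (s+1)
    simp only [Nat.add_sub_cancel] at this
    rw [← this]
  · simp

private lemma phi3_reduce (m : ℤ) {w z : ℝ} (hw : 0 < w) (hz : 0 ≤ z) :
    w ^ (1 - m) * Phi3 1 (2 - (m:ℝ)) w (w*z) = ∑' s : ℕ, Sterm m w z s := by
  have hsum : Summable (eterm m w z) := eterm_summable m hw.le hz
  have h1 : Phi3 1 (2 - (m:ℝ)) w (w*z) = ∑' p : ℕ × ℕ, eterm m w z p := by
    unfold Phi3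
    rw [Summable.tsum_prod' hsum (fun k => hsum.prod_factor k)]
    exact tsum_congr fun k => tsum_congr fun j => phi3Term_eq m w z k j
  have hsig : Summable (fun x : (Σ n : ℕ, Finset.HasAntidiagonal.antidiagonal n) =>
      eterm m w z (Finset.HasAntidiagonal.sigmaAntidiagonalEquivProd x)) :=
    (Finset.HasAntidiagonal.sigmaAntidiagonalEquivProd.summable_iff).2 hsum
  have h2 : ∑' p : ℕ × ℕ, eterm m w z p
      = ∑' s : ℕ, ∑ kj ∈ Finset.HasAntidiagonal.antidiagonal s, eterm m w z kj := by
    rw [← Finset.HasAntidiagonal.sigmaAntidiagonalEquivProd.tsum_eq (eterm m w z)]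
    rw [Summable.tsum_sigma' (fun n => Summable.of_finite) hsig]
    exact tsum_congr fun s => Finset.tsum_subtype _ _
  rw [h1, h2]
  rw [← tsum_mul_left]
  apply tsum_congr
  intro s
  rw [antidiag_sum]
  unfold Sterm
  split
  · rename_i hc
    have hpow : w ^ (1 - m) * w ^ s = w ^ (1 - m + s).toNat := by
      rw [← zpow_natCast w s, ← zpow_add₀ hw.ne', ← zpow_natCast w (1 - m + s).toNat]
      congr 1
      omega
    have hre : w ^ (1 - m) * (w ^ s / (Nat.factorial (1 - m + s).toNat : ℝ)
          * (∑ l ∈ Finset.range (s+1), z ^ l / Nat.factorial l))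
        = (w ^ (1 - m) * w ^ s) / (Nat.factorial (1 - m + s).toNat : ℝ)
          * (∑ l ∈ Finset.range (s+1), z ^ l / Nat.factorial l) := by ring
    rw [hre, hpow]
  · simp

private def dd (m : ℤ) : ℕ := if 1 ≤ m then (m-1).natAbs else 0
private def ee (m : ℤ) : ℕ := if 1 ≤ m then 0 else (m-1).natAbs

private noncomputable def cc (m : ℤ) (a : ℝ) (j : ℕ) : ℝ :=
  Real.exp (-(a^2)/2) * a^(2*(j + ee m)) / 2^(2*j + (m-1).natAbs) /
    (Nat.factorial j * Nat.factorial (j + (m-1).natAbs))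

private lemma pointwise (m : ℤ) {a x : ℝ} (ha : 0 < a) (hx : 0 < x) :
    x ^ m / a ^ (m - 1) * Real.exp (-(a ^ 2 + x ^ 2) / 2) * besselI (m - 1) (a * x)
      = ∑' j : ℕ, cc m a j * (x ^ (2*(j + dd m)+1) * Real.exp (-(x^2)/2)) := by
  unfold besselI
  rw [← tsum_mul_left]
  apply tsum_congr
  intro j
  have hde1 : m + ((2*j + (m-1).natAbs : ℕ) : ℤ) = ((2*(j + dd m)+1 : ℕ) : ℤ) := by
    unfold dd
    by_cases h1m : 1 ≤ m
    · rw [if_pos h1m]; omega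
    · rw [if_neg h1m]; omega
  have hde2 : ((2*j + (m-1).natAbs : ℕ) : ℤ) - (m - 1) = ((2*(j + ee m) : ℕ) : ℤ) := by
    unfold ee
    by_cases h1m : 1 ≤ m
    · rw [if_pos h1m]; omega
    · rw [if_neg h1m]; omega
  have hxm : x ^ m * x ^ (2*j + (m-1).natAbs) = x ^ (2*(j + dd m)+1) := by
    rw [← zpow_natCast x (2*j + (m-1).natAbs), ← zpow_add₀ hx.ne',
      ← zpow_natCast x (2*(j + dd m)+1)]
    exact congrArg _ hde1
  have ham : a ^ (2*j + (m-1).natAbs) / a ^ (m-1) = a ^ (2*(j + ee m)) := by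
    rw [← zpow_natCast a (2*j + (m-1).natAbs), ← zpow_sub₀ ha.ne',
      ← zpow_natCast a (2*(j + ee m))]
    exact congrArg _ hde2
  have hsplit : Real.exp (-(a^2 + x^2)/2) = Real.exp (-(a^2)/2) * Real.exp (-(x^2)/2) := by
    rw [← Real.exp_add]; ring_nf
  have hprod : ((a*x)/2)^(2*j + (m-1).natAbs)
      = a^(2*j + (m-1).natAbs) * x^(2*j + (m-1).natAbs) / 2^(2*j + (m-1).natAbs) := by
    rw [div_pow, mul_pow]
  rw [hsplit, hprod]
  calc x ^ m / a ^ (m - 1) * (Real.exp (-(a^2)/2) * Real.exp (-(x^2)/2)) *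
        (a^(2*j + (m-1).natAbs) * x^(2*j + (m-1).natAbs) / 2^(2*j + (m-1).natAbs) /
          (Nat.factorial j * Nat.factorial (j + (m-1).natAbs)))
      = (x ^ m * x ^ (2*j + (m-1).natAbs)) * (a ^ (2*j + (m-1).natAbs) / a ^ (m-1)) *
          Real.exp (-(a^2)/2) / 2^(2*j + (m-1).natAbs) /
          (Nat.factorial j * Nat.factorial (j + (m-1).natAbs)) * Real.exp (-(x^2)/2) := by
        ring
    _ = cc m a j * (x ^ (2*(j + dd m)+1) * Real.exp (-(x^2)/2)) := by
        rw [hxm, ham]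
        unfold cc
        ring

private lemma hc2 (m : ℤ) {a : ℝ} (ha : 0 < a) (j : ℕ) :
    cc m a j * (2^(j + dd m) * (Nat.factorial (j + dd m) : ℝ))
      = Real.exp (-(a^2)/2) * (a^2/2)^(j + ee m) / Nat.factorial (j + ee m) := by
  unfold cc dd ee
  have hfj : (Nat.factorial j : ℝ) ≠ 0 := Nat.cast_ne_zero.2 (Nat.factorial_ne_zero _)
  have hfjv : (Nat.factorial (j + (m-1).natAbs) : ℝ) ≠ 0 :=
    Nat.cast_ne_zero.2 (Nat.factorial_ne_zero _)
  have hsplit2 : (2:ℝ)^(2*j + (m-1).natAbs) = 2^j * 2^(j + (m-1).natAbs) := by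
    rw [← pow_add]; congr 1; omega
  by_cases h1m : 1 ≤ m
  · rw [if_pos h1m, if_pos h1m]
    simp only [add_zero]
    rw [hsplit2, div_pow, ← pow_mul]
    field_simp
  · rw [if_neg h1m, if_neg h1m]
    simp only [add_zero]
    rw [hsplit2, div_pow, ← pow_mul]
    field_simp


private lemma marcum_eq (m : ℤ) {a b : ℝ} (ha : 0 < a) (hb : 0 < b) :
    marcumQ m a b = Real.exp (-(a^2+b^2)/2) * ∑' s : ℕ, Sterm m (a^2/2) (b^2/2) s := by
  have hccn : ∀ j : ℕ, 0 ≤ cc m a j := by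
    intro j
    unfold cc
    positivity
  set g : ℕ → ℝ → ℝ := fun j x => cc m a j * (x ^ (2*(j + dd m)+1) * Real.exp (-(x^2)/2))
    with hg
  have hgnn : ∀ j : ℕ, ∀ x ∈ Set.Ioi b, 0 ≤ g j x := by
    intro j x hx
    have hx0 : (0:ℝ) < x := lt_trans hb hx
    have := hccn j
    rw [hg]
    positivity
  have hint : ∀ j : ℕ, IntegrableOn (g j) (Set.Ioi b) := by
    intro j
    exact (intP_integrable hb (j + dd m)).const_mul _
  have hval : ∀ j : ℕ, (∫ x in Set.Ioi b, g j x)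
      = Real.exp (-(a^2+b^2)/2) *
          ((a^2/2)^(j + ee m) / Nat.factorial (j + ee m) *
            ∑ l ∈ Finset.range (j + dd m + 1), (b^2/2)^l / Nat.factorial l) := by
    intro j
    rw [hg]
    simp only []
    rw [MeasureTheory.integral_const_mul, intP hb (j + dd m)]
    have h1 := hc2 m ha j
    have hexp : Real.exp (-(a^2)/2) * Real.exp (-(b^2)/2) = Real.exp (-(a^2+b^2)/2) := by
      rw [← Real.exp_add]; ring_nf
    calc cc m a j * (2 ^ (j + dd m) * ↑(Nat.factorial (j + dd m)) *
            (Real.exp (-(b^2)/2) * ∑ l ∈ Finset.range (j + dd m + 1), (b^2/2)^l / Nat.factorial l))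
        = (cc m a j * (2 ^ (j + dd m) * ↑(Nat.factorial (j + dd m)))) *
            (Real.exp (-(b^2)/2) * ∑ l ∈ Finset.range (j + dd m + 1), (b^2/2)^l / Nat.factorial l) := by
          ring
      _ = (Real.exp (-(a^2)/2) * (a^2/2)^(j + ee m) / Nat.factorial (j + ee m)) *
            (Real.exp (-(b^2)/2) * ∑ l ∈ Finset.range (j + dd m + 1), (b^2/2)^l / Nat.factorial l) := by
          rw [h1]
      _ = (Real.exp (-(a^2)/2) * Real.exp (-(b^2)/2)) *
            ((a^2/2)^(j + ee m) / Nat.factorial (j + ee m) *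
              ∑ l ∈ Finset.range (j + dd m + 1), (b^2/2)^l / Nat.factorial l) := by
          ring
      _ = _ := by rw [hexp]
  have hbsum : Summable (fun j : ℕ => (a^2/2)^(j + ee m) / (Nat.factorial (j + ee m) : ℝ)) :=
    (summable_nat_add_iff (ee m)).2 (Real.summable_pow_div_factorial (a^2/2))
  have hvsum : Summable (fun j : ℕ => ∫ x in Set.Ioi b, g j x) := by
    apply Summable.of_nonneg_of_le
      (fun j => MeasureTheory.setIntegral_nonneg measurableSet_Ioi (fun x hx => hgnn j x hx))
      (fun j => ?_)
      ((hbsum.mul_left (Real.exp (-(a^2+b^2)/2) * Real.exp (b^2/2))))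
    rw [hval j]
    have hinner : ∑ l ∈ Finset.range (j + dd m + 1), (b^2/2)^l / (Nat.factorial l : ℝ)
        ≤ Real.exp (b^2/2) := Real.sum_le_exp_of_nonneg (by positivity) _
    have h0 : (0:ℝ) ≤ (a^2/2)^(j + ee m) / Nat.factorial (j + ee m) := by positivity
    calc Real.exp (-(a^2+b^2)/2) * ((a^2/2)^(j + ee m) / Nat.factorial (j + ee m) *
            ∑ l ∈ Finset.range (j + dd m + 1), (b^2/2)^l / Nat.factorial l)
        ≤ Real.exp (-(a^2+b^2)/2) * ((a^2/2)^(j + ee m) / Nat.factorial (j + ee m) *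
            Real.exp (b^2/2)) := by
          apply mul_le_mul_of_nonneg_left _ (Real.exp_pos _).le
          exact mul_le_mul_of_nonneg_left hinner h0
      _ = Real.exp (-(a^2+b^2)/2) * Real.exp (b^2/2) *
            ((a^2/2)^(j + ee m) / Nat.factorial (j + ee m)) := by ring
  have hmeas : ∀ j : ℕ, AEStronglyMeasurable (g j) (volume.restrict (Set.Ioi b)) := by
    intro j
    apply Continuous.aestronglyMeasurable
    rw [hg]
    continuity
  have hgnn_ae : ∀ j : ℕ, 0 ≤ᵐ[volume.restrict (Set.Ioi b)] g j := by
    intro j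
    filter_upwards [ae_restrict_mem measurableSet_Ioi] with x hx
    exact hgnn j x hx
  have hlin : ∀ j : ℕ, (∫⁻ x in Set.Ioi b, ‖g j x‖₊)
      = ENNReal.ofReal (∫ x in Set.Ioi b, g j x) := by
    intro j
    rw [MeasureTheory.ofReal_integral_eq_lintegral_ofReal (hint j) (hgnn_ae j)]
    apply lintegral_congr_ae
    filter_upwards [ae_restrict_mem measurableSet_Ioi] with x hx
    exact Real.enorm_eq_ofReal (hgnn j x hx)
  have hlint : (∑' j : ℕ, ∫⁻ x in Set.Ioi b, ‖g j x‖₊) ≠ ⊤ := by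
    rw [tsum_congr hlin,
      ← ENNReal.ofReal_tsum_of_nonneg
        (fun j => MeasureTheory.setIntegral_nonneg measurableSet_Ioi (fun x hx => hgnn j x hx))
        hvsum]
    exact ENNReal.ofReal_ne_top
  have hpt : Set.EqOn (fun x : ℝ =>
        x ^ m / a ^ (m - 1) * Real.exp (-(a ^ 2 + x ^ 2) / 2) * besselI (m - 1) (a * x))
      (fun x : ℝ => ∑' j : ℕ, g j x) (Set.Ioi b) := by
    intro x hx
    exact pointwise m ha (lt_trans hb hx)
  unfold marcumQ
  rw [MeasureTheory.setIntegral_congr_fun measurableSet_Ioi hpt,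
    MeasureTheory.integral_tsum hmeas hlint, tsum_congr hval, tsum_mul_left]
  congr 1
  by_cases h1m : 1 ≤ m
  · have hd : dd m = (m-1).natAbs := if_pos h1m
    have he : ee m = 0 := if_pos h1m
    have hinj : Function.Injective (fun j : ℕ => j + (m-1).natAbs) :=
      fun x y h => by simpa using h
    have hsupp : Function.support (Sterm m (a^2/2) (b^2/2))
        ⊆ Set.range (fun j : ℕ => j + (m-1).natAbs) := by
      intro s hs
      rw [Function.mem_support] at hs
      rcases Nat.lt_or_ge s ((m-1).natAbs) with hlt | hge
      · exfalso
        apply hs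
        unfold Sterm
        have hneg : ¬ (0 ≤ 1 - m + (s:ℤ)) := by omega
        rw [if_neg hneg]
        simp
      · exact ⟨s - (m-1).natAbs, Nat.sub_add_cancel hge⟩
    rw [← Function.Injective.tsum_eq hinj hsupp]
    apply tsum_congr
    intro j
    simp only [Sterm]
    rw [if_pos (by omega)]
    have ht : (1 - m + ((j + (m-1).natAbs : ℕ) : ℤ)).toNat = j := by omega
    rw [ht, hd, he, add_zero]
  · apply tsum_congr
    intro s
    simp only [Sterm]
    have hd : dd m = 0 := if_neg h1m
    have he : ee m = (m-1).natAbs := if_neg h1m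
    rw [if_pos (by omega)]
    have ht : (1 - m + (s:ℤ)).toNat = s + (m-1).natAbs := by omega
    rw [ht, hd, he, add_zero]

/-- Q_m(a,b) = (a²/2)^{1−m} e^{−(a²+b²)/2} Φ̃₃(1,2−m;a²/2,a²b²/4), integer m. -/
theorem marcumQ_phi3 (m : ℤ) (a b : ℝ) (ha : 0 < a) (hb : 0 < b) :
    marcumQ m a b =
      (a ^ 2 / 2) ^ (1 - m) * Real.exp (-(a ^ 2 + b ^ 2) / 2) *
        Phi3 1 (2 - (m : ℝ)) (a ^ 2 / 2) (a ^ 2 * b ^ 2 / 4) := by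
  have hw : (0:ℝ) < a^2/2 := by positivity
  have hz : (0:ℝ) ≤ b^2/2 := by positivity
  have h4 : a^2*b^2/4 = (a^2/2)*(b^2/2) := by ring
  rw [marcum_eq m ha hb, h4, ← phi3_reduce m hw hz]
  ring
end
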